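/- Let h ∈ ℝ[X,Y] be a square-free polynomial. Then h has only finitely many double roots in ℂ², i.e., the set {(x,y) ∈ ℂ² : h(x,y) = 0, (∂h/∂X)(x,y) = 0, (∂h/∂Y)(x,y) = 0} is finite. -/

import Mathlib

open MvPolynomial
open scoped nonZeroDivisors

noncomputable section

open Polynomial in
/-- Bézout-type certificate: a squarefree polynomial over a char-zero UFD admits
`A * H + B * H' = C d` with `d ≠ 0`. -/
private lemma key_bezout {R : Type*} [CommRing R] [IsDomain R] [UniqueFactorizationMonoid R]
    [CharZero R] (H : R[X]) (hsq : Squarefree H) :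
    ∃ A B : R[X], ∃ d : R, d ≠ 0 ∧ A * H + B * derivative H = Polynomial.C d := by
  classical
  have hH0 : H ≠ 0 := by
    intro e; rw [e] at hsq; exact not_squarefree_zero hsq
  by_cases hdeg : H.natDegree = 0
  · obtain ⟨c, hc⟩ := Polynomial.natDegree_eq_zero.mp hdeg
    refine ⟨1, 0, c, fun hc0 => hH0 ?_, ?_⟩
    · rw [← hc, hc0, map_zero]
    · rw [← hc]; simp
  letI : NormalizationMonoid R := UniqueFactorizationMonoid.normalizationMonoid.toNormalizationMonoid
  letI : NormalizedGCDMonoid R := UniqueFactorizationMonoid.toNormalizedGCDMonoid R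
  set K := FractionRing R with hK
  have hφ : Function.Injective (algebraMap R K) := IsFractionRing.injective R K
  have hinj : Function.Injective (Polynomial.map (algebraMap R K)) :=
    Polynomial.map_injective _ hφ
  have hH'0 : H.map (algebraMap R K) ≠ 0 := by
    intro e
    apply hH0
    apply hinj
    rw [Polynomial.map_zero]
    exact e
  have hder0 : derivative H ≠ 0 := fun e =>
    hdeg (Polynomial.natDegree_eq_zero_of_derivative_eq_zero e)
  have smul_eq : ∀ (c : R) (p : K[X]), (c : R) • p = Polynomial.C (algebraMap R K c) * p := by
    intro c p
    rw [← algebraMap_smul K c p, Polynomial.smul_eq_C_mul]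
  have hcop : IsCoprime (H.map (algebraMap R K)) ((derivative H).map (algebraMap R K)) := by
    apply EuclideanDomain.isCoprime_of_dvd
    · rintro ⟨e1, -⟩; exact hH'0 e1
    · intro z hz hz0 hzH hzD
      obtain ⟨q, hqirr, hqz⟩ := WfDvdMonoid.exists_irreducible_factor hz hz0
      have hqH : q ∣ H.map (algebraMap R K) := hqz.trans hzH
      have hqD : q ∣ (derivative H).map (algebraMap R K) := hqz.trans hzD
      have hq0 : q ≠ 0 := hqirr.ne_zero
      set N := IsLocalization.integerNormalization R⁰ q with hN
      have hN0 : N ≠ 0 := fun e => hq0 (IsFractionRing.integerNormalization_eq_zero_iff.mp e)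
      set Q := N.primPart with hQdef
      obtain ⟨b, hb⟩ := IsLocalization.integerNormalization_map_to_map R⁰ q
      have hbsmul : N.map (algebraMap R K) = Polynomial.C (algebraMap R K (b : R)) * q := by
        rw [hb, smul_eq]
      have hub : IsUnit (Polynomial.C (algebraMap R K (b : R))) := by
        refine Polynomial.isUnit_C.mpr (isUnit_iff_ne_zero.mpr fun e => ?_)
        refine mem_nonZeroDivisors_iff_ne_zero.mp b.2 (hφ ?_)
        rw [map_zero]
        exact e
      have hassoc1 : Associated q (N.map (algebraMap R K)) := by
        exact ⟨hub.unit, by rw [IsUnit.unit_spec, hbsmul, mul_comm]⟩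
      have hcont : N.content ≠ 0 := fun e => hN0 (Polynomial.content_eq_zero_iff.mp e)
      have hucont : IsUnit (Polynomial.C (algebraMap R K N.content)) := by
        refine Polynomial.isUnit_C.mpr (isUnit_iff_ne_zero.mpr fun e => ?_)
        exact hcont (hφ (by simpa using e))
      have hNQ : N.map (algebraMap R K)
          = Polynomial.C (algebraMap R K N.content) * Q.map (algebraMap R K) := by
        conv_lhs => rw [N.eq_C_content_mul_primPart]
        rw [Polynomial.map_mul, Polynomial.map_C]
      have hassoc2 : Associated (N.map (algebraMap R K)) (Q.map (algebraMap R K)) := by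
        refine Associated.symm ⟨hucont.unit, ?_⟩
        rw [IsUnit.unit_spec, hNQ, mul_comm]
      have hassocQq : Associated (Q.map (algebraMap R K)) q :=
        (hassoc2.symm.trans hassoc1.symm)
      have hQmapirr : Irreducible (Q.map (algebraMap R K)) := hassocQq.symm.irreducible hqirr
      have hQprim : Q.IsPrimitive := N.isPrimitive_primPart
      have hQirr : Irreducible Q :=
        (hQprim.irreducible_iff_irreducible_map_fraction_map (K := K)).mpr hQmapirr
      have hQprime : Prime Q := UniqueFactorizationMonoid.irreducible_iff_prime.mp hQirr
      have hQ0 : Q ≠ 0 := hQirr.ne_zero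
      have hQdeg : 0 < Q.degree := by
        have hdm : (Q.map (algebraMap R K)).degree = Q.degree :=
          Polynomial.degree_map_eq_of_injective hφ Q
        rw [← hdm]
        exact Polynomial.degree_pos_of_irreducible hQmapirr
      have pull : ∀ P : R[X], P ≠ 0 → q ∣ P.map (algebraMap R K) → Q ∣ P := by
        intro P hP hqP
        have h1 : Q.map (algebraMap R K) ∣ P.map (algebraMap R K) :=
          (hassocQq.dvd_iff_dvd_left).mpr hqP
        have hPc : P.content ≠ 0 := fun e => hP (Polynomial.content_eq_zero_iff.mp e)
        have huP : IsUnit (Polynomial.C (algebraMap R K P.content)) := by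
          refine Polynomial.isUnit_C.mpr (isUnit_iff_ne_zero.mpr fun e => ?_)
          exact hPc (hφ (by simpa using e))
        have hP2 : P.map (algebraMap R K)
            = Polynomial.C (algebraMap R K P.content) * (P.primPart.map (algebraMap R K)) := by
          conv_lhs => rw [P.eq_C_content_mul_primPart]
          rw [Polynomial.map_mul, Polynomial.map_C]
        rw [hP2, huP.dvd_mul_left] at h1
        exact (hQprim.dvd_of_fraction_map_dvd_fraction_map h1).trans
          P.primPart_dvd
      have hQH : Q ∣ H := pull H hH0 hqH
      have hQD : Q ∣ derivative H := pull _ hder0 hqD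
      obtain ⟨T, hT⟩ := hQH
      have hQdQT : Q ∣ derivative Q * T := by
        have hd : derivative Q * T = derivative H - Q * derivative T := by
          rw [hT, Polynomial.derivative_mul]; ring
        rw [hd]
        exact dvd_sub hQD (dvd_mul_right Q _)
      rcases hQprime.2.2 _ _ hQdQT with hQdQ | hQT
      · have hdQ0 : derivative Q ≠ 0 := by
          intro e
          have h1 := Polynomial.natDegree_eq_zero_of_derivative_eq_zero e
          have h2 : 0 < Q.natDegree := Polynomial.natDegree_pos_iff_degree_pos.mpr hQdeg
          omega
        have hle := Polynomial.degree_le_of_dvd hQdQ hdQ0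
        have hlt := Polynomial.degree_derivative_lt hQ0
        exact absurd (lt_of_le_of_lt hle hlt) (lt_irrefl _)
      · obtain ⟨S, rfl⟩ := hQT
        exact hQirr.not_isUnit (hsq Q ⟨S, by rw [hT]; ring⟩)
  obtain ⟨a, b, hab⟩ := hcop
  obtain ⟨ca, hca⟩ := IsLocalization.integerNormalization_map_to_map R⁰ a
  obtain ⟨cb, hcb⟩ := IsLocalization.integerNormalization_map_to_map R⁰ b
  refine ⟨Polynomial.C (cb : R) * IsLocalization.integerNormalization R⁰ a,
    Polynomial.C (ca : R) * IsLocalization.integerNormalization R⁰ b,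
    (ca : R) * (cb : R),
    mul_ne_zero (mem_nonZeroDivisors_iff_ne_zero.mp ca.2)
      (mem_nonZeroDivisors_iff_ne_zero.mp cb.2), ?_⟩
  apply hinj
  rw [Polynomial.map_add, Polynomial.map_mul, Polynomial.map_mul, Polynomial.map_mul,
    Polynomial.map_mul, Polynomial.map_C, Polynomial.map_C, Polynomial.map_C, hca, hcb,
    smul_eq, smul_eq, map_mul]
  rw [Polynomial.C_mul]
  linear_combination (Polynomial.C (algebraMap R K (ca : R))
    * Polynomial.C (algebraMap R K (cb : R))) * hab

private lemma squarefree_mulEquiv {M N : Type*} [Monoid M] [Monoid N] (e : M ≃* N) {x : M}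
    (h : Squarefree x) : Squarefree (e x) := by
  intro y hy
  have hd : e.symm y * e.symm y ∣ x := by
    have := map_dvd e.symm hy
    simpa using this
  have := h _ hd
  simpa using this.map e

private lemma finSuccEquiv_pderiv_zero (p : MvPolynomial (Fin 2) ℝ) :
    finSuccEquiv ℝ 1 (pderiv (0 : Fin 2) p) = Polynomial.derivative (finSuccEquiv ℝ 1 p) := by
  have hX : ∀ j : Fin 2, (finSuccEquiv ℝ 1) (pderiv (0 : Fin 2) (X j))
      = Polynomial.derivative ((finSuccEquiv ℝ 1) (X j)) := by
    intro j
    refine Fin.cases ?_ ?_ j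
    · simp [finSuccEquiv_X_zero]
    · intro i
      rw [pderiv_X_of_ne (Fin.succ_ne_zero i)]
      simp [finSuccEquiv_X_succ]
  induction p using MvPolynomial.induction_on with
  | C a =>
      simp [finSuccEquiv_apply]
  | add p q hp hq => simp [hp, hq]
  | mul_X p j hp =>
      rw [pderiv_mul, map_add, map_mul, map_mul, map_mul, hp, hX j,
        Polynomial.derivative_mul]

private lemma finSuccEquiv_rename_succ (d : MvPolynomial (Fin 1) ℝ) :
    finSuccEquiv ℝ 1 (rename Fin.succ d) = Polynomial.C d := by
  induction d using MvPolynomial.induction_on with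
  | C a => simp [finSuccEquiv_apply]
  | add p q hp hq => simp [hp, hq]
  | mul_X p j hp =>
      rw [map_mul, map_mul, rename_X, finSuccEquiv_X_succ, hp, ← Polynomial.C_mul]

/-- From squarefreeness, a certificate forcing the second coordinate of a common
zero of `h` and `∂₀ h` into a finite set. -/
private lemma coord_certificate (h : MvPolynomial (Fin 2) ℝ) (hsq : Squarefree h) :
    ∃ d : MvPolynomial (Fin 1) ℝ, d ≠ 0 ∧
      ∀ z : Fin 2 → ℂ, aeval z h = 0 → aeval z (pderiv (0 : Fin 2) h) = 0 →
        aeval (z ∘ Fin.succ) d = 0 := by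
  set e := finSuccEquiv ℝ 1 with he
  have hsq' : Squarefree (e h) := squarefree_mulEquiv e.toRingEquiv.toMulEquiv hsq
  obtain ⟨A, B, d, hd0, heq⟩ := key_bezout (e h) hsq'
  refine ⟨d, hd0, ?_⟩
  have heq2 : e.symm A * h + e.symm B * pderiv (0 : Fin 2) h = rename Fin.succ d := by
    apply e.injective
    rw [map_add, map_mul, map_mul, e.apply_symm_apply, e.apply_symm_apply,
      finSuccEquiv_rename_succ, finSuccEquiv_pderiv_zero, heq]
  intro z hz1 hz2
  have h3 := congrArg (aeval z) heq2
  rw [map_add, map_mul, map_mul, hz1, hz2, mul_zero, mul_zero, add_zero,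
    aeval_rename] at h3
  exact h3.symm

private lemma roots_fin_one (d : MvPolynomial (Fin 1) ℝ) (hd : d ≠ 0) :
    {w : ℂ | aeval (fun _ : Fin 1 => w) d = 0}.Finite := by
  set E : MvPolynomial (Fin 1) ℝ ≃ₐ[ℝ] Polynomial ℝ :=
    (renameEquiv ℝ (Equiv.equivPUnit.{1, 1} (Fin 1))).trans (pUnitAlgEquiv ℝ) with hE
  set q : Polynomial ℝ := E d with hq
  have hq0 : q ≠ 0 := by
    intro e
    apply hd
    have h2 := congrArg E.symm e
    rw [hq] at h2
    simpa using h2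
  have hcompat : ∀ w : ℂ, aeval (fun _ : Fin 1 => w) d = Polynomial.aeval w q := by
    intro w
    have key : (Polynomial.aeval w).comp (E.toAlgHom)
        = (aeval (fun _ : Fin 1 => w) : MvPolynomial (Fin 1) ℝ →ₐ[ℝ] ℂ) := by
      apply MvPolynomial.algHom_ext
      intro i
      simp [hE, pUnitAlgEquiv]
    have := congrArg (fun f : MvPolynomial (Fin 1) ℝ →ₐ[ℝ] ℂ => f d) key
    simpa using this.symm
  have hfin : {w : ℂ | Polynomial.IsRoot (q.map (algebraMap ℝ ℂ)) w}.Finite := by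
    apply Polynomial.finite_setOf_isRoot
    exact (Polynomial.map_ne_zero_iff (algebraMap ℝ ℂ).injective).mpr hq0
  refine hfin.subset ?_
  intro w hw
  simp only [Set.mem_setOf_eq] at hw ⊢
  rw [hcompat w] at hw
  rwa [Polynomial.IsRoot.def, Polynomial.eval_map, ← Polynomial.aeval_def]

/-- Lemma `quadratfrei`: a square-free polynomial in `ℝ[X,Y]` has only finitely many double
roots in `ℂ²`, i.e. points where it vanishes together with both partial derivatives. -/
theorem stmt_13 (h : MvPolynomial (Fin 2) ℝ)
    (hsf : ∀ p : MvPolynomial (Fin 2) ℝ, Irreducible p → ¬ (p * p ∣ h)) :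
    {z : Fin 2 → ℂ | aeval z h = 0 ∧
      aeval z (MvPolynomial.pderiv (0 : Fin 2) h) = 0 ∧
      aeval z (MvPolynomial.pderiv (1 : Fin 2) h) = 0}.Finite := by
  classical
  -- `h` is squarefree
  have hXirr : Irreducible (X (0 : Fin 2) : MvPolynomial (Fin 2) ℝ) := by
    have : Prime (X (0 : Fin 2) : MvPolynomial (Fin 2) ℝ) := by
      rw [← MulEquiv.prime_iff (finSuccEquiv ℝ 1).toRingEquiv.toMulEquiv]
      show Prime (finSuccEquiv ℝ 1 (X (0 : Fin 2)))
      rw [finSuccEquiv_X_zero]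
      exact Polynomial.prime_X
    exact this.irreducible
  have hsq : Squarefree h :=
    (squarefree_iff_irreducible_sq_not_dvd_of_exists_irreducible ⟨_, hXirr⟩).mpr hsf
  -- certificate for the second coordinate
  obtain ⟨d1, hd10, hd1⟩ := coord_certificate h hsq
  -- certificate for the first coordinate, via the swap
  have hsq' : Squarefree (rename (Equiv.swap (0 : Fin 2) 1) h) :=
    squarefree_mulEquiv (renameEquiv ℝ (Equiv.swap (0 : Fin 2) 1)).toRingEquiv.toMulEquiv hsq
  obtain ⟨d0, hd00, hd0⟩ := coord_certificate _ hsq'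
  -- the big finite set
  have hfin0 := roots_fin_one d0 hd00
  have hfin1 := roots_fin_one d1 hd10
  set t : Fin 2 → Set ℂ := ![{w : ℂ | aeval (fun _ : Fin 1 => w) d0 = 0},
    {w : ℂ | aeval (fun _ : Fin 1 => w) d1 = 0}] with ht
  have hpi : (Set.pi Set.univ t).Finite := by
    apply Set.Finite.pi
    intro i
    fin_cases i
    · simpa [ht] using hfin0
    · simpa [ht] using hfin1
  refine hpi.subset ?_
  rintro z ⟨hz, hz0, hz1⟩
  have hsucc : (z ∘ Fin.succ) = fun _ : Fin 1 => z 1 := by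
    funext i
    have : i = 0 := Subsingleton.elim i 0
    subst this
    rfl
  -- coordinate 1
  have hc1 : aeval (fun _ : Fin 1 => z 1) d1 = 0 := by
    rw [← hsucc]; exact hd1 z hz hz0
  -- coordinate 0, via swap
  have hc0 : aeval (fun _ : Fin 1 => z 0) d0 = 0 := by
    set σ := Equiv.swap (0 : Fin 2) 1 with hσ
    have hz' : aeval (z ∘ σ) (rename (σ : Fin 2 → Fin 2) h) = 0 := by
      rw [aeval_rename]
      have : (z ∘ σ) ∘ (σ : Fin 2 → Fin 2) = z := by
        funext i
        exact congrArg z (Equiv.swap_apply_self 0 1 i)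
      rwa [this]
    have hzp' : aeval (z ∘ σ) (pderiv (0 : Fin 2) (rename (σ : Fin 2 → Fin 2) h)) = 0 := by
      have hswap1 : σ 1 = 0 := Equiv.swap_apply_right 0 1
      have := pderiv_rename σ.injective (1 : Fin 2) h
      rw [hswap1] at this
      rw [this, aeval_rename]
      have hcc : (z ∘ σ) ∘ (σ : Fin 2 → Fin 2) = z := by
        funext i
        exact congrArg z (Equiv.swap_apply_self 0 1 i)
      rwa [hcc]
    have := hd0 (z ∘ σ) hz' hzp'
    have hsucc' : ((z ∘ σ) ∘ Fin.succ) = fun _ : Fin 1 => z 0 := by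
      funext i
      have : i = 0 := Subsingleton.elim i 0
      subst this
      show z (σ 1) = z 0
      rw [Equiv.swap_apply_right]
    rwa [hsucc'] at this
  intro i _
  fin_cases i
  · simpa [ht] using hc0
  · simpa [ht] using hc1

end
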